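/- Let g be the 2π-periodic function with g(x) = 1 − (2/π)·d_{S¹}(0,x) and f(θ_1,…,θ_n) = Σ_{i,j} a_ij g(θ_i − θ_j) for a finite simple graph G with adjacency matrix (a_ij). Then min over (θ_1,…,θ_n) ∈ (S¹)^n of f equals 2|E| − 4·MaxCut(G); in particular f is bounded below by −2|E|. -/

import Mathlib

open Finset

variable {V : Type*} [Fintype V] [DecidableEq V]

/-- Number of neighbors of `v` lying in `S`. -/
def degIn (G : SimpleGraph V) [DecidableRel G.Adj] (v : V) (S : Finset V) : ℕ :=
  (S.filter (G.Adj v)).card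

/-- Number of edges with one endpoint in `X` and the other in `Y`
(each edge counted once; for `X = Y` this is the number of edges inside `X`). -/
def eBtw (G : SimpleGraph V) [DecidableRel G.Adj] (X Y : Finset V) : ℕ :=
  (G.edgeFinset.filter (fun e => ∃ x ∈ X, ∃ y ∈ Y, e = s(x, y))).card

open Real

/-- Arc-length distance from `0` to `x` on the circle `ℝ/2πℤ` of circumference `2π`. -/
noncomputable def dS1 (x : ℝ) : ℝ :=
  min (2 * π * Int.fract (x / (2 * π))) (2 * π - 2 * π * Int.fract (x / (2 * π)))

/-- `g x = 1 - (2/π) d_{S¹}(0,x)`. -/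
noncomputable def gfun (x : ℝ) : ℝ := 1 - (2 / π) * dS1 x

/-- The energy functional `f(θ) = Σ_{i,j} a_ij g(θ_i - θ_j)`. -/
noncomputable def energy (G : SimpleGraph V) [DecidableRel G.Adj] (θ : V → ℝ) : ℝ :=
  ∑ i : V, ∑ j : V, (if G.Adj i j then (1 : ℝ) else 0) * gfun (θ i - θ j)

/-- The maximum cut of `G`. -/
def maxCut (G : SimpleGraph V) [DecidableRel G.Adj] : ℕ :=
  (Finset.univ : Finset (Finset V)).sup (fun S => eBtw G S (Finset.univ \ S))

open MeasureTheory
open scoped ENNReal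

noncomputable def mdist (x : ℝ) : ℝ := min (Int.fract x) (1 - Int.fract x)

lemma mdist_nonneg (x : ℝ) : 0 ≤ mdist x := by
  have h1 := Int.fract_nonneg x
  have h2 := (Int.fract_lt_one x).le
  simp only [mdist, le_min_iff]; constructor <;> linarith


lemma xor_ne_iff {A B : Prop} : (A ≠ B) ↔ ((A ∧ ¬B) ∨ (¬A ∧ B)) := by
  simp only [ne_eq, eq_iff_iff]; tauto

lemma msXor' {f g : ℝ → ℝ} (hf : Measurable f) (hg : Measurable g) :
    MeasurableSet {t : ℝ | (Int.fract (f t) < 1/2) ≠ (Int.fract (g t) < 1/2)} := by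
  have hA : MeasurableSet {t : ℝ | Int.fract (f t) < 1/2} :=
    measurableSet_lt (measurable_fract.comp hf) measurable_const
  have hB : MeasurableSet {t : ℝ | Int.fract (g t) < 1/2} :=
    measurableSet_lt (measurable_fract.comp hg) measurable_const
  have heq : {t : ℝ | (Int.fract (f t) < 1/2) ≠ (Int.fract (g t) < 1/2)}
      = ({t : ℝ | Int.fract (f t) < 1/2} ∩ {t : ℝ | Int.fract (g t) < 1/2}ᶜ)
        ∪ ({t : ℝ | Int.fract (f t) < 1/2}ᶜ ∩ {t : ℝ | Int.fract (g t) < 1/2}) := by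
    ext t
    simp only [Set.mem_setOf_eq, Set.mem_union, Set.mem_inter_iff, Set.mem_compl_iff,
      ne_eq, eq_iff_iff]
    tauto
  rw [heq]
  exact (hA.inter hB.compl).union (hA.compl.inter hB)


lemma shift_one (P : Set ℝ) (hper : ∀ s, s + 1 ∈ P ↔ s ∈ P) (p q : ℝ) :
    volume (P ∩ Set.Ico p q) = volume (P ∩ Set.Ico (p+1) (q+1)) := by
  have hset : P ∩ Set.Ico p q = (fun x : ℝ => x + 1) ⁻¹' (P ∩ Set.Ico (p+1) (q+1)) := by
    ext x
    simp only [Set.mem_inter_iff, Set.mem_Ico, Set.mem_preimage, hper]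
    constructor <;> rintro ⟨h1, h2, h3⟩ <;> exact ⟨h1, by linarith, by linarith⟩
  rw [hset, measure_preimage_add_right]

lemma mem_int_shift (P : Set ℝ) (hper : ∀ s, s + 1 ∈ P ↔ s ∈ P) (k : ℤ) (s : ℝ) :
    s + k ∈ P ↔ s ∈ P := by
  induction k using Int.induction_on with
  | zero => simp
  | succ n ih =>
      rw [show s + ((n:ℤ)+1 : ℤ) = (s + (n:ℤ)) + 1 by push_cast; ring, hper]; exact ih
  | pred n ih =>
      have h := hper (s + (-(n:ℤ)-1 : ℤ))
      rw [show (s + (-(n:ℤ)-1 : ℤ)) + 1 = s + (-(n:ℤ) : ℤ) by push_cast; ring] at h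
      exact h.symm.trans ih

lemma window (cond : ℝ → Prop) (hm : MeasurableSet {s | cond s})
    (hper : ∀ s, cond (s + 1) ↔ cond s) (c : ℝ) :
    volume {s | s ∈ Set.Ico c (c+1) ∧ cond s} = volume {s | s ∈ Set.Ico (0:ℝ) 1 ∧ cond s} := by
  set P := {s | cond s} with hP
  have hmemP : ∀ s : ℝ, s + 1 ∈ P ↔ s ∈ P := hper
  have hset1 : ∀ p q : ℝ, {s | s ∈ Set.Ico p q ∧ cond s} = P ∩ Set.Ico p q := by
    intro p q; ext x; simp only [Set.mem_setOf_eq, Set.mem_inter_iff]; tauto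
  rw [hset1, hset1]
  set k : ℤ := ⌈c⌉ with hk
  have hck : c ≤ (k:ℝ) := Int.le_ceil c
  have hkc : (k:ℝ) ≤ c + 1 := by
    have := Int.ceil_lt_add_one c; linarith
  -- split
  have hsplit : Set.Ico c (c+1) = Set.Ico c (k:ℝ) ∪ Set.Ico (k:ℝ) (c+1) := (Set.Ico_union_Ico_eq_Ico hck hkc).symm
  have hd : Disjoint (P ∩ Set.Ico c (k:ℝ)) (P ∩ Set.Ico (k:ℝ) (c+1)) :=
    (Set.Ico_disjoint_Ico_same (a := c) (b := (k:ℝ)) (c := c+1)).mono Set.inter_subset_right Set.inter_subset_right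
  have hmIco : ∀ p q : ℝ, MeasurableSet (P ∩ Set.Ico p q) := fun p q => hm.inter measurableSet_Ico
  rw [hsplit, Set.inter_union_distrib_left, measure_union hd (hmIco _ _)]
  rw [shift_one P hmemP c (k:ℝ)]
  have hd2 : Disjoint (P ∩ Set.Ico (k:ℝ) (c+1)) (P ∩ Set.Ico (c+1) ((k:ℝ)+1)) :=
    (Set.Ico_disjoint_Ico_same (a := (k:ℝ)) (b := c+1) (c := (k:ℝ)+1)).mono Set.inter_subset_right Set.inter_subset_right
  rw [add_comm, ← measure_union hd2 (hmIco _ _), ← Set.inter_union_distrib_left,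
    Set.Ico_union_Ico_eq_Ico hkc (by linarith)]
  -- now shift by -k
  have hset2 : P ∩ Set.Ico (0:ℝ) 1 = (fun x : ℝ => x + (k:ℝ)) ⁻¹' (P ∩ Set.Ico (k:ℝ) ((k:ℝ)+1)) := by
    ext x
    simp only [Set.mem_inter_iff, Set.mem_Ico, Set.mem_preimage]
    rw [mem_int_shift P hmemP k x]
    constructor <;> rintro ⟨h1, h2, h3⟩ <;> exact ⟨h1, by linarith, by linarith⟩
  rw [hset2, measure_preimage_add_right]


lemma core (w : ℝ) (h0 : 0 ≤ w) (h1 : w < 1) :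
    volume {s : ℝ | s ∈ Set.Ico (0:ℝ) 1 ∧ ((Int.fract s < 1/2) ≠ (Int.fract (s + w) < 1/2))}
      = ENNReal.ofReal (2 * min w (1 - w)) := by
  have hfr : ∀ s : ℝ, 0 ≤ s → s < 1 → Int.fract s = s := fun s a b => Int.fract_eq_self.mpr ⟨a, b⟩
  have hfr2 : ∀ s : ℝ, 1 ≤ s → s < 2 → Int.fract s = s - 1 := by
    intro s a b
    rw [show s = (s - 1) + 1 by ring, Int.fract_add_one, hfr (s-1) (by linarith) (by linarith)]
    ring
  rcases lt_or_ge w (1/2) with hw | hw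
  · have hset : {s : ℝ | s ∈ Set.Ico (0:ℝ) 1 ∧ ((Int.fract s < 1/2) ≠ (Int.fract (s + w) < 1/2))}
        = Set.Ico (1/2 - w) (1/2) ∪ Set.Ico (1-w) 1 := by
      ext s
      simp only [Set.mem_setOf_eq, Set.mem_Ico, Set.mem_union]
      constructor
      · rintro ⟨⟨hs0, hs1⟩, hne⟩
        rw [hfr s hs0 hs1] at hne
        by_cases hsw : s + w < 1
        · rw [hfr (s+w) (by linarith) hsw] at hne
          rcases xor_ne_iff.mp hne with ⟨hA, hB⟩ | ⟨hA, hB⟩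
          · rw [not_lt] at hB; exact Or.inl ⟨by linarith, hA⟩
          · rw [not_lt] at hA; exfalso; linarith
        · rw [not_lt] at hsw
          exact Or.inr ⟨by linarith, hs1⟩
      · rintro (⟨h2, h3⟩ | ⟨h2, h3⟩)
        · have hs0 : (0:ℝ) ≤ s := by linarith
          have hs1 : s < 1 := by linarith
          refine ⟨⟨hs0, hs1⟩, ?_⟩
          rw [hfr s hs0 hs1, hfr (s+w) (by linarith) (by linarith)]
          exact xor_ne_iff.mpr (Or.inl ⟨h3, by rw [not_lt]; linarith⟩)
        · have hs0 : (0:ℝ) ≤ s := by linarith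
          refine ⟨⟨hs0, h3⟩, ?_⟩
          rw [hfr s hs0 h3, hfr2 (s+w) (by linarith) (by linarith)]
          exact xor_ne_iff.mpr (Or.inr ⟨by rw [not_lt]; linarith, by linarith⟩)
    rw [hset, measure_union ?hd measurableSet_Ico]
    case hd =>
      rw [Set.Ico_disjoint_Ico]
      exact (min_le_left _ _).trans (le_trans (by linarith) (le_max_right _ _))
    rw [Real.volume_Ico, Real.volume_Ico, ← ENNReal.ofReal_add (by linarith) (by linarith),
      min_eq_left (by linarith)]
    congr 1; ring
  · have hset : {s : ℝ | s ∈ Set.Ico (0:ℝ) 1 ∧ ((Int.fract s < 1/2) ≠ (Int.fract (s + w) < 1/2))}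
        = Set.Ico (0:ℝ) (1-w) ∪ Set.Ico (1/2) (3/2 - w) := by
      ext s
      simp only [Set.mem_setOf_eq, Set.mem_Ico, Set.mem_union]
      constructor
      · rintro ⟨⟨hs0, hs1⟩, hne⟩
        rw [hfr s hs0 hs1] at hne
        by_cases hsw : s + w < 1
        · rw [hfr (s+w) (by linarith) hsw] at hne
          rcases xor_ne_iff.mp hne with ⟨hA, hB⟩ | ⟨hA, hB⟩
          · exact Or.inl ⟨hs0, by linarith⟩
          · rw [not_lt] at hA; exfalso; linarith
        · rw [not_lt] at hsw
          rw [hfr2 (s+w) hsw (by linarith)] at hne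
          rcases xor_ne_iff.mp hne with ⟨hA, hB⟩ | ⟨hA, hB⟩
          · rw [not_lt] at hB; exfalso; linarith
          · rw [not_lt] at hA; exact Or.inr ⟨hA, by linarith⟩
      · rintro (⟨h2, h3⟩ | ⟨h2, h3⟩)
        · refine ⟨⟨h2, by linarith⟩, ?_⟩
          rw [hfr s h2 (by linarith), hfr (s+w) (by linarith) (by linarith)]
          exact xor_ne_iff.mpr (Or.inl ⟨by linarith, by rw [not_lt]; linarith⟩)
        · have hs0 : (0:ℝ) ≤ s := by linarith
          have hs1 : s < 1 := by linarith
          refine ⟨⟨hs0, hs1⟩, ?_⟩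
          rw [hfr s hs0 hs1, hfr2 (s+w) (by linarith) (by linarith)]
          exact xor_ne_iff.mpr (Or.inr ⟨by rw [not_lt]; linarith, by linarith⟩)
    rw [hset, measure_union ?hd2 measurableSet_Ico]
    case hd2 =>
      rw [Set.Ico_disjoint_Ico]
      exact (min_le_left _ _).trans (le_trans (by linarith) (le_max_right _ _))
    rw [Real.volume_Ico, Real.volume_Ico, ← ENNReal.ofReal_add (by linarith) (by linarith),
      min_eq_right (by linarith)]
    congr 1; ring


lemma meas_pair (a b : ℝ) :
    volume {t : ℝ | t ∈ Set.Ico (0:ℝ) 1 ∧ ((Int.fract (t - a) < 1/2) ≠ (Int.fract (t - b) < 1/2))}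
      = ENNReal.ofReal (2 * mdist (a - b)) := by
  set w := Int.fract (a - b) with hw
  set cond₀ : ℝ → Prop := fun s => (Int.fract s < 1/2) ≠ (Int.fract (s + w) < 1/2) with hcond
  have key : ∀ s : ℝ, ((Int.fract (s + a - a) < 1/2) ≠ (Int.fract (s + a - b) < 1/2)) ↔ cond₀ s := by
    intro s
    have e1 : s + a - a = s := by ring
    have e2 : Int.fract (s + a - b) = Int.fract (s + w) := by
      rw [hw]
      rw [show s + a - b = s + Int.fract (a - b) + ⌊a - b⌋ by
        simp only [Int.fract]; ring]
      exact Int.fract_add_intCast _ _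
    rw [e1, e2]
  have h1 : volume {t : ℝ | t ∈ Set.Ico (0:ℝ) 1 ∧
        ((Int.fract (t - a) < 1/2) ≠ (Int.fract (t - b) < 1/2))}
      = volume {s : ℝ | s ∈ Set.Ico (-a) (-a + 1) ∧ cond₀ s} := by
    rw [← measure_preimage_add_right volume a]
    congr 1
    ext s
    simp only [Set.mem_preimage, Set.mem_setOf_eq, Set.mem_Ico]
    rw [key s]
    constructor <;> rintro ⟨⟨u, v⟩, h⟩ <;> exact ⟨⟨by linarith, by linarith⟩, h⟩
  have hmeas : MeasurableSet {s : ℝ | cond₀ s} :=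
    msXor' measurable_id (measurable_id.add_const w)
  have hper : ∀ s, cond₀ (s + 1) ↔ cond₀ s := by
    intro s
    simp only [hcond]
    rw [Int.fract_add_one, show s + 1 + w = (s + w) + 1 by ring, Int.fract_add_one]
  rw [h1, window cond₀ hmeas hper (-a), core w (Int.fract_nonneg _) (Int.fract_lt_one _)]
  rfl


section Comb

variable (G : SimpleGraph V) [DecidableRel G.Adj]

lemma card_T1 (S : Finset V) :
    ((univ ×ˢ univ).filter (fun p : V × V => G.Adj p.1 p.2 ∧ p.1 ∈ S ∧ p.2 ∉ S)).card
      = eBtw G S (univ \ S) := by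
  refine Finset.card_bij (fun p _ => Sym2.mk p.1 p.2) ?_ ?_ ?_
  · rintro ⟨x, y⟩ hp
    simp only [Finset.mem_filter, Finset.mem_product] at hp
    obtain ⟨-, hadj, hx, hy⟩ := hp
    refine Finset.mem_filter.mpr ⟨?_, x, hx, y, Finset.mem_sdiff.mpr ⟨Finset.mem_univ y, hy⟩, rfl⟩
    rw [SimpleGraph.mem_edgeFinset]
    exact hadj
  · rintro ⟨x, y⟩ hp ⟨x', y'⟩ hq h
    simp only [Finset.mem_filter, Finset.mem_product] at hp hq
    obtain ⟨-, -, hx, hy⟩ := hp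
    obtain ⟨-, -, hx', hy'⟩ := hq
    rcases Sym2.eq_iff.mp h with ⟨rfl, rfl⟩ | ⟨rfl, rfl⟩
    · rfl
    · exact absurd hx' hy
  · intro e he
    simp only [Finset.mem_filter] at he
    obtain ⟨he, x, hx, y, hy, rfl⟩ := he
    have hadj : G.Adj x y := (SimpleGraph.mem_edgeSet G).mp (SimpleGraph.mem_edgeFinset.mp he)
    refine ⟨(x, y), ?_, rfl⟩
    simp only [Finset.mem_filter, Finset.mem_product]
    exact ⟨⟨Finset.mem_univ x, Finset.mem_univ y⟩, hadj, hx, (Finset.mem_sdiff.mp hy).2⟩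

lemma card_T2 (S : Finset V) :
    ((univ ×ˢ univ).filter (fun p : V × V => G.Adj p.1 p.2 ∧ p.1 ∉ S ∧ p.2 ∈ S)).card
      = eBtw G S (univ \ S) := by
  refine Finset.card_bij (fun p _ => Sym2.mk p.1 p.2) ?_ ?_ ?_
  · rintro ⟨x, y⟩ hp
    simp only [Finset.mem_filter, Finset.mem_product] at hp
    obtain ⟨-, hadj, hx, hy⟩ := hp
    refine Finset.mem_filter.mpr ⟨?_, y, hy, x, Finset.mem_sdiff.mpr ⟨Finset.mem_univ x, hx⟩, ?_⟩
    · rw [SimpleGraph.mem_edgeFinset]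
      exact hadj
    · exact Sym2.eq_swap
  · rintro ⟨x, y⟩ hp ⟨x', y'⟩ hq h
    simp only [Finset.mem_filter, Finset.mem_product] at hp hq
    obtain ⟨-, -, hx, hy⟩ := hp
    obtain ⟨-, -, hx', hy'⟩ := hq
    rcases Sym2.eq_iff.mp h with ⟨rfl, rfl⟩ | ⟨rfl, rfl⟩
    · rfl
    · exact absurd hy' hx
  · intro e he
    simp only [Finset.mem_filter] at he
    obtain ⟨he, x, hx, y, hy, rfl⟩ := he
    have hadj : G.Adj x y := (SimpleGraph.mem_edgeSet G).mp (SimpleGraph.mem_edgeFinset.mp he)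
    refine ⟨(y, x), ?_, Sym2.eq_swap⟩
    simp only [Finset.mem_filter, Finset.mem_product]
    exact ⟨⟨Finset.mem_univ y, Finset.mem_univ x⟩, hadj.symm, (Finset.mem_sdiff.mp hy).2, hx⟩

lemma bridge (S : Finset V) :
    ((univ ×ˢ univ).filter
        (fun p : V × V => G.Adj p.1 p.2 ∧ ((p.1 ∈ S ∧ p.2 ∉ S) ∨ (p.1 ∉ S ∧ p.2 ∈ S)))).card
      = 2 * eBtw G S (univ \ S) := by
  have hsplit : (univ ×ˢ univ).filter
        (fun p : V × V => G.Adj p.1 p.2 ∧ ((p.1 ∈ S ∧ p.2 ∉ S) ∨ (p.1 ∉ S ∧ p.2 ∈ S)))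
      = ((univ ×ˢ univ).filter (fun p : V × V => G.Adj p.1 p.2 ∧ p.1 ∈ S ∧ p.2 ∉ S))
        ∪ ((univ ×ˢ univ).filter (fun p : V × V => G.Adj p.1 p.2 ∧ p.1 ∉ S ∧ p.2 ∈ S)) := by
    rw [← Finset.filter_or]
    apply Finset.filter_congr
    intro p _
    tauto
  rw [hsplit, Finset.card_union_of_disjoint, card_T1, card_T2]
  · ring
  · rw [Finset.disjoint_filter]
    rintro p _ ⟨-, h1, h2⟩ ⟨-, h3, h4⟩
    exact h3 h1

lemma le_maxCut (S : Finset V) : eBtw G S (univ \ S) ≤ maxCut G :=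
  Finset.le_sup (f := fun S => eBtw G S (univ \ S)) (Finset.mem_univ S)

lemma maxCut_le : maxCut G ≤ G.edgeFinset.card :=
  Finset.sup_le fun S _ => Finset.card_filter_le _ _

lemma exists_maxCut : ∃ S : Finset V, eBtw G S (univ \ S) = maxCut G := by
  obtain ⟨S, -, hS⟩ := Finset.exists_mem_eq_sup (Finset.univ : Finset (Finset V))
    ⟨∅, Finset.mem_univ ∅⟩ (fun S => eBtw G S (univ \ S))
  exact ⟨S, hS.symm⟩

lemma card_adj_pairs :
    ((univ ×ˢ univ).filter (fun p : V × V => G.Adj p.1 p.2)).card = 2 * G.edgeFinset.card := by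
  rw [Finset.card_filter, Finset.sum_product]
  have : ∀ i : V, (∑ j : V, if G.Adj i j then 1 else 0) = G.degree i := by
    intro i
    rw [← Finset.card_filter, SimpleGraph.degree, ← SimpleGraph.neighborFinset_eq_filter]
  simp_rw [this]
  exact SimpleGraph.sum_degrees_eq_twice_card_edges G


lemma key (G : SimpleGraph V) [DecidableRel G.Adj] (φ : V → ℝ) :
    ∑ p ∈ (univ ×ˢ univ).filter (fun p : V × V => G.Adj p.1 p.2),
      mdist (φ p.1 - φ p.2) ≤ (maxCut G : ℝ) := by
  classical
  set E' := (univ ×ˢ univ).filter (fun p : V × V => G.Adj p.1 p.2) with hE'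
  set μ := volume.restrict (Set.Ico (0:ℝ) 1) with hμ
  set C : V × V → Set ℝ :=
    fun p => {t | (Int.fract (t - φ p.1) < 1/2) ≠ (Int.fract (t - φ p.2) < 1/2)} with hC
  have hCm : ∀ p : V × V, MeasurableSet (C p) :=
    fun p => msXor' (measurable_id.sub_const _) (measurable_id.sub_const _)
  have hμC : ∀ p : V × V, μ (C p) = ENNReal.ofReal (2 * mdist (φ p.1 - φ p.2)) := by
    intro p
    rw [hμ, Measure.restrict_apply (hCm p), ← meas_pair (φ p.1) (φ p.2)]
    congr 1
    ext t
    simp only [hC, Set.mem_inter_iff, Set.mem_setOf_eq, Set.mem_Ico]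
    tauto
  have hpt : ∀ t : ℝ, (∑ p ∈ E', (C p).indicator (1 : ℝ → ℝ≥0∞) t)
      ≤ ((2 * maxCut G : ℕ) : ℝ≥0∞) := by
    intro t
    set S : Finset V := univ.filter (fun i => Int.fract (t - φ i) < 1/2) with hS
    have hmem : ∀ p : V × V, t ∈ C p ↔ ((p.1 ∈ S ∧ p.2 ∉ S) ∨ (p.1 ∉ S ∧ p.2 ∈ S)) := by
      intro p
      simp only [hC, Set.mem_setOf_eq, hS, Finset.mem_filter, Finset.mem_univ, true_and]
      exact xor_ne_iff
    have h1 : (∑ p ∈ E', (C p).indicator (1 : ℝ → ℝ≥0∞) t)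
        = ((E'.filter (fun p => t ∈ C p)).card : ℝ≥0∞) := by
      rw [← Finset.sum_boole]
      apply Finset.sum_congr rfl
      intro p _
      rw [Set.indicator_apply]
      simp
    rw [h1]
    have h2 : E'.filter (fun p => t ∈ C p)
        = (univ ×ˢ univ).filter
            (fun p : V × V => G.Adj p.1 p.2 ∧ ((p.1 ∈ S ∧ p.2 ∉ S) ∨ (p.1 ∉ S ∧ p.2 ∈ S))) := by
      rw [hE', Finset.filter_filter]
      apply Finset.filter_congr
      intro p _
      rw [hmem p]
    rw [h2, bridge G S]
    have h3 : 2 * eBtw G S (univ \ S) ≤ 2 * maxCut G :=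
      Nat.mul_le_mul_left 2 (le_maxCut G S)
    exact_mod_cast Nat.cast_le.mpr h3
  have hsum : ∑ p ∈ E', μ (C p) ≤ ((2 * maxCut G : ℕ) : ℝ≥0∞) := by
    have e1 : ∑ p ∈ E', μ (C p) = ∫⁻ t, (∑ p ∈ E', (C p).indicator (1 : ℝ → ℝ≥0∞) t) ∂μ := by
      rw [lintegral_finset_sum E' (fun p _ => (measurable_one.indicator (hCm p)))]
      exact Finset.sum_congr rfl fun p _ => (lintegral_indicator_one (hCm p)).symm
    rw [e1]
    calc ∫⁻ t, (∑ p ∈ E', (C p).indicator (1 : ℝ → ℝ≥0∞) t) ∂μ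
        ≤ ∫⁻ _, ((2 * maxCut G : ℕ) : ℝ≥0∞) ∂μ := lintegral_mono hpt
      _ = ((2 * maxCut G : ℕ) : ℝ≥0∞) * μ Set.univ := lintegral_const _
      _ ≤ ((2 * maxCut G : ℕ) : ℝ≥0∞) := by
          rw [hμ, Measure.restrict_apply_univ, Real.volume_Ico]
          simp
  have hofreal : ENNReal.ofReal (∑ p ∈ E', 2 * mdist (φ p.1 - φ p.2))
      ≤ ENNReal.ofReal ((2 * maxCut G : ℕ) : ℝ) := by
    rw [ENNReal.ofReal_sum_of_nonneg (fun p _ => by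
      have := mdist_nonneg (φ p.1 - φ p.2); linarith)]
    calc ∑ p ∈ E', ENNReal.ofReal (2 * mdist (φ p.1 - φ p.2))
        = ∑ p ∈ E', μ (C p) := Finset.sum_congr rfl fun p _ => (hμC p).symm
      _ ≤ ((2 * maxCut G : ℕ) : ℝ≥0∞) := hsum
      _ = ENNReal.ofReal ((2 * maxCut G : ℕ) : ℝ) := by
          rw [ENNReal.ofReal_natCast]
  have hfinal : (∑ p ∈ E', 2 * mdist (φ p.1 - φ p.2)) ≤ ((2 * maxCut G : ℕ) : ℝ) :=
    (ENNReal.ofReal_le_ofReal_iff (by positivity)).mp hofreal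
  rw [← Finset.mul_sum] at hfinal
  push_cast at hfinal ⊢
  linarith


lemma gfun_eq (x : ℝ) : gfun x = 1 - 4 * mdist (x / (2 * π)) := by
  have h2π : (0:ℝ) ≤ 2 * π := by positivity
  have hne : π ≠ 0 := pi_ne_zero
  unfold gfun dS1 mdist
  rw [show 2*π - 2*π*Int.fract (x/(2*π)) = 2*π*(1 - Int.fract (x/(2*π))) by ring]
  rw [← mul_min_of_nonneg _ _ h2π]
  have : 2/π * (2*π*(min (Int.fract (x/(2*π))) (1 - Int.fract (x/(2*π)))))
      = 4 * min (Int.fract (x/(2*π))) (1 - Int.fract (x/(2*π))) := by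
    field_simp
    ring
  rw [this]

lemma energy_eq (G : SimpleGraph V) [DecidableRel G.Adj] (θ : V → ℝ) :
    energy G θ = ∑ p ∈ (univ ×ˢ univ).filter (fun p : V × V => G.Adj p.1 p.2),
      gfun (θ p.1 - θ p.2) := by
  unfold energy
  rw [← Finset.sum_product', Finset.sum_filter]
  exact Finset.sum_congr rfl fun p _ => boole_mul _ _

lemma gfun_zero : gfun 0 = 1 := by
  rw [gfun_eq, zero_div]
  unfold mdist
  rw [Int.fract_zero]
  norm_num

lemma fract_half : Int.fract (1/2 : ℝ) = 1/2 :=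
  Int.fract_eq_self.mpr ⟨by norm_num, by norm_num⟩

lemma gfun_pi : gfun π = -1 := by
  rw [gfun_eq, show π / (2*π) = 1/2 by field_simp]
  unfold mdist
  rw [fract_half]
  norm_num

lemma gfun_neg_pi : gfun (-π) = -1 := by
  rw [gfun_eq, show -π / (2*π) = -(1/2) by field_simp]
  unfold mdist
  rw [Int.fract_neg (by rw [fract_half]; norm_num), fract_half]
  norm_num

end Comb

theorem energy_min_eq_maxcut (G : SimpleGraph V) [DecidableRel G.Adj] :
    IsLeast {y : ℝ | ∃ θ : V → ℝ, y = energy G θ}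
      (2 * (G.edgeFinset.card : ℝ) - 4 * (maxCut G : ℝ)) ∧
    ∀ θ : V → ℝ, -(2 * (G.edgeFinset.card : ℝ)) ≤ energy G θ := by
  classical
  set E' := (univ ×ˢ univ).filter (fun p : V × V => G.Adj p.1 p.2) with hE'
  have hcard : (E'.card : ℝ) = 2 * (G.edgeFinset.card : ℝ) := by
    rw [hE']
    exact_mod_cast congrArg (Nat.cast : ℕ → ℝ) (card_adj_pairs G)
  have hlb : ∀ θ : V → ℝ, 2 * (G.edgeFinset.card : ℝ) - 4 * (maxCut G : ℝ) ≤ energy G θ := by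
    intro θ
    rw [energy_eq]
    have hterm : ∀ p ∈ E', gfun (θ p.1 - θ p.2)
        = 1 - 4 * mdist (θ p.1 / (2*π) - θ p.2 / (2*π)) := by
      intro p _
      rw [gfun_eq, sub_div]
    rw [Finset.sum_congr rfl hterm, Finset.sum_sub_distrib, Finset.sum_const, ← Finset.mul_sum]
    have hk := key G (fun i => θ i / (2*π))
    rw [← hE'] at hk
    have : (E'.card : ℝ) • (1:ℝ) = (E'.card : ℝ) := by simp
    rw [nsmul_eq_mul, mul_one]
    rw [hcard] at *
    linarith
  refine ⟨⟨?_, ?_⟩, ?_⟩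
  · obtain ⟨S₀, hS₀⟩ := exists_maxCut G
    refine ⟨fun i => if i ∈ S₀ then (0:ℝ) else π, ?_⟩
    rw [energy_eq]
    have hval : ∀ p ∈ E',
        gfun ((if p.1 ∈ S₀ then (0:ℝ) else π) - (if p.2 ∈ S₀ then (0:ℝ) else π))
        = 1 - 2 * (if ((p.1 ∈ S₀ ∧ p.2 ∉ S₀) ∨ (p.1 ∉ S₀ ∧ p.2 ∈ S₀)) then (1:ℝ) else 0) := by
      intro p _
      by_cases h1 : p.1 ∈ S₀ <;> by_cases h2 : p.2 ∈ S₀ <;>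
        simp only [h1, h2, if_true, if_false, sub_zero, zero_sub, sub_self, not_true, not_false_iff,
          and_true, and_false, true_and, false_and, false_or, or_false, or_self] <;>
        first
          | (rw [gfun_zero]; norm_num)
          | (rw [gfun_pi]; norm_num)
          | (rw [gfun_neg_pi]; norm_num)
    rw [Finset.sum_congr rfl hval, Finset.sum_sub_distrib, Finset.sum_const, ← Finset.mul_sum,
      Finset.sum_boole, nsmul_eq_mul, mul_one]
    have hfilter : E'.filter (fun p : V × V => (p.1 ∈ S₀ ∧ p.2 ∉ S₀) ∨ (p.1 ∉ S₀ ∧ p.2 ∈ S₀))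
        = (univ ×ˢ univ).filter
            (fun p : V × V => G.Adj p.1 p.2 ∧ ((p.1 ∈ S₀ ∧ p.2 ∉ S₀) ∨ (p.1 ∉ S₀ ∧ p.2 ∈ S₀))) := by
      rw [hE', Finset.filter_filter]
    rw [hfilter, bridge G S₀, hS₀]
    push_cast
    rw [hcard]
    ring
  · rintro y ⟨θ, rfl⟩
    exact hlb θ
  · intro θ
    have hM : (maxCut G : ℝ) ≤ (G.edgeFinset.card : ℝ) := by exact_mod_cast maxCut_le G
    linarith [hlb θ]
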